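/- Let D_n be the database with facts t_{11},...,t_{n1}, t_{12}, t_{13}, ..., t_{n2}, t_{n3} and conflict edges: {t_{i1}, t_{j1}} for all i ≠ j, {t_{i1}, t_{i2}} for all i, and {t_{i2}, t_{i3}} for all i. Then the repairs (maximal conflict-free subsets) are exactly: the set {t_{12}, ..., t_{n2}}, together with all sets {t_{i1}, t_{i3}} ∪ { t_j : j ≠ i } where each t_j ∈ {t_{j2}, t_{j3}}, for each 1 ≤ i ≤ n. -/
import Mathlib


variable {F : Type*} [DecidableEq F]

/-- M is a model of the disjunctive database D: it meets every disjunction. -/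
def IsModel (D : Finset (Finset F)) (M : Finset F) : Prop :=
  ∀ d ∈ D, ∃ t ∈ d, t ∈ M

/-- M is a minimal model of D. -/
def IsMinModel (D : Finset (Finset F)) (M : Finset F) : Prop :=
  IsModel D M ∧ ∀ M' ⊂ M, ¬ IsModel D M'

/-- reduction removes every disjunction properly containing another disjunction of D. -/
def reduction (D : Finset (Finset F)) : Finset (Finset F) :=
  D.filter (fun d => ∀ d' ∈ D, ¬ d' ⊂ d)

/-- S is conflict-free w.r.t. a binary conflict relation G. -/
def ConflictFree (G : F → F → Prop) (S : Finset F) : Prop :=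
  ∀ a ∈ S, ∀ b ∈ S, ¬ G a b

/-- S is a repair of V w.r.t. conflict relation G: a maximal conflict-free subset of V. -/
def IsRepairC (V : Finset F) (G : F → F → Prop) (S : Finset F) : Prop :=
  S ⊆ V ∧ ConflictFree G S ∧ ∀ S', S ⊂ S' → S' ⊆ V → ¬ ConflictFree G S'

/-- Conflict relation of the family D_n: facts are (i,k) with k=0,1,2 encoding
    t_{i1}, t_{i2}, t_{i3}. Edges: {t_{i1},t_{j1}} for i≠j, {t_{i1},t_{i2}}, {t_{i2},t_{i3}}. -/
def ConfDn (n : ℕ) (a b : Fin n × Fin 3) : Prop :=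
  (a.2 = 0 ∧ b.2 = 0 ∧ a.1 ≠ b.1) ∨
  (a.1 = b.1 ∧ ((a.2 = 0 ∧ b.2 = 1) ∨ (a.2 = 1 ∧ b.2 = 0) ∨
                (a.2 = 1 ∧ b.2 = 2) ∨ (a.2 = 2 ∧ b.2 = 1)))

/-- The repair {t_{12},...,t_{n2}}. -/
def repA (n : ℕ) : Finset (Fin n × Fin 3) :=
  Finset.univ.image (fun i => (i, (1 : Fin 3)))

/-- The repair {t_{i1}, t_{i3}} ∪ { (j, f j) : j ≠ i } (for f choosing among t_{j2}, t_{j3}). -/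
def repB (n : ℕ) (i : Fin n) (f : Fin n → Fin 3) : Finset (Fin n × Fin 3) :=
  insert (i, (0 : Fin 3)) (insert (i, (2 : Fin 3))
    ((Finset.univ.erase i).image (fun j => (j, f j))))

/-- The disjunctions t_{i2} ∨ t_{i3}. -/
def DnD1 (n : ℕ) : Finset (Finset (Fin n × Fin 3)) :=
  Finset.univ.image (fun i : Fin n => ({(i, (1 : Fin 3)), (i, (2 : Fin 3))} : Finset (Fin n × Fin 3)))

/-- The disjunctions t_{i1} ∨ t_{i2} ∨ ⋁_{z ≠ i} t_z with t_z ∈ {t_{z1}, t_{z3}}. -/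
def DnD2 (n : ℕ) : Finset (Finset (Fin n × Fin 3)) :=
  Finset.univ.image (fun p : Fin n × (Fin n → Bool) =>
    insert (p.1, (0 : Fin 3)) (insert (p.1, (1 : Fin 3))
      ((Finset.univ.erase p.1).image
        (fun z => (z, if p.2 z then (0 : Fin 3) else (2 : Fin 3))))))

/-- The disjunctions t_1 ∨ ... ∨ t_n with t_i ∈ {t_{i1}, t_{i3}}. -/
def DnD3 (n : ℕ) : Finset (Finset (Fin n × Fin 3)) :=
  Finset.univ.image (fun g : Fin n → Bool =>
    Finset.univ.image (fun i : Fin n => (i, if g i then (0 : Fin 3) else (2 : Fin 3))))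

/-! ### Auxiliary lemmas -/

lemma mem_repA {n : ℕ} {x : Fin n × Fin 3} : x ∈ repA n ↔ x.2 = 1 := by
  simp [repA, Prod.ext_iff, eq_comm]

lemma mem_repB {n : ℕ} {i : Fin n} {f : Fin n → Fin 3} {x : Fin n × Fin 3} :
    x ∈ repB n i f ↔ x = (i, 0) ∨ x = (i, 2) ∨ (x.1 ≠ i ∧ x = (x.1, f x.1)) := by
  simp only [repB, Finset.mem_insert, Finset.mem_image, Finset.mem_erase, Finset.mem_univ,
    and_true]
  constructor
  · rintro (h | h | ⟨j, hj, rfl⟩)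
    · exact Or.inl h
    · exact Or.inr (Or.inl h)
    · exact Or.inr (Or.inr ⟨hj, rfl⟩)
  · rintro (h | h | ⟨hj, hx⟩)
    · exact Or.inl h
    · exact Or.inr (Or.inl h)
    · exact Or.inr (Or.inr ⟨x.1, hj, hx.symm⟩)

lemma fin3_cases (k : Fin 3) : k = 0 ∨ k = 1 ∨ k = 2 := by omega

lemma confDn_irrefl {n : ℕ} (a : Fin n × Fin 3) : ¬ ConfDn n a a := by
  rcases fin3_cases a.2 with h | h | h <;> simp [ConfDn, h]

lemma confDn_symm {n : ℕ} {a b : Fin n × Fin 3} (h : ConfDn n a b) : ConfDn n b a := by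
  rcases h with ⟨h1, h2, h3⟩ | ⟨h1, h2⟩
  · exact Or.inl ⟨h2, h1, fun hc => h3 hc.symm⟩
  · exact Or.inr ⟨h1.symm, by tauto⟩

lemma insert_cf {n : ℕ} {S : Finset (Fin n × Fin 3)} {x : Fin n × Fin 3}
    (hcf : ConflictFree (ConfDn n) S) (h : ∀ b ∈ S, ¬ ConfDn n x b) :
    ConflictFree (ConfDn n) (insert x S) := by
  intro a ha b hb
  rcases Finset.mem_insert.mp ha with rfl | ha'
  · rcases Finset.mem_insert.mp hb with rfl | hb'
    · exact confDn_irrefl _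
    · exact h b hb'
  · rcases Finset.mem_insert.mp hb with rfl | hb'
    · exact fun hc => h a ha' (confDn_symm hc)
    · exact hcf a ha' b hb'

lemma mem_repA' {n : ℕ} {j : Fin n} {k : Fin 3} : (j, k) ∈ repA n ↔ k = 1 :=
  mem_repA

lemma mem_repB' {n : ℕ} {i : Fin n} {f : Fin n → Fin 3} {j : Fin n} {k : Fin 3} :
    (j, k) ∈ repB n i f ↔ (j = i ∧ k = 0) ∨ (j = i ∧ k = 2) ∨ (j ≠ i ∧ k = f j) := by
  rw [mem_repB]
  simp [Prod.ext_iff]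

lemma confDn_pairs {n : ℕ} {i j : Fin n} {x y : Fin 3} :
    ConfDn n (i, x) (j, y) ↔
      (x = 0 ∧ y = 0 ∧ i ≠ j) ∨
      (i = j ∧ ((x = 0 ∧ y = 1) ∨ (x = 1 ∧ y = 0) ∨ (x = 1 ∧ y = 2) ∨ (x = 2 ∧ y = 1))) :=
  Iff.rfl

theorem stmt12 (n : ℕ) :
    ∀ S : Finset (Fin n × Fin 3),
      IsRepairC Finset.univ (ConfDn n) S
      ↔ (S = repA n ∨
          ∃ (i : Fin n) (f : Fin n → Fin 3),
            (∀ j, f j = 1 ∨ f j = 2) ∧ S = repB n i f) := by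
  intro S
  constructor
  · rintro ⟨-, hcf, hmax⟩
    by_cases h0 : ∃ i : Fin n, (i, (0 : Fin 3)) ∈ S
    · obtain ⟨i, hi0⟩ := h0
      right
      have hi1 : (i, (1 : Fin 3)) ∉ S := fun h =>
        hcf _ hi0 _ h (confDn_pairs.mpr (Or.inr ⟨rfl, Or.inl ⟨rfl, rfl⟩⟩))
      have huniq : ∀ j : Fin n, (j, (0 : Fin 3)) ∈ S → j = i := by
        intro j hj
        by_contra hji
        exact hcf _ hj _ hi0 (confDn_pairs.mpr (Or.inl ⟨rfl, rfl, hji⟩))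
      have hi2 : (i, (2 : Fin 3)) ∈ S := by
        by_contra h2
        refine hmax (insert (i, (2 : Fin 3)) S) (Finset.ssubset_insert h2)
          (Finset.subset_univ _) (insert_cf hcf ?_)
        rintro ⟨j, k⟩ hb hc
        rcases confDn_pairs.mp hc with ⟨h1, -⟩ | ⟨rfl, hcc⟩
        · exact absurd h1 (by decide)
        · rcases hcc with ⟨ha, -⟩ | ⟨ha, -⟩ | ⟨ha, -⟩ | ⟨-, rfl⟩
          · exact absurd ha (by decide)
          · exact absurd ha (by decide)
          · exact absurd ha (by decide)
          · exact hi1 hb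
      have hone : ∀ j : Fin n, j ≠ i → ((j, (1 : Fin 3)) ∈ S ↔ (j, (2 : Fin 3)) ∉ S) := by
        intro j hji
        constructor
        · intro h1 h2
          exact hcf _ h1 _ h2 (confDn_pairs.mpr (Or.inr ⟨rfl, by tauto⟩))
        · intro h2
          by_contra h1
          refine hmax (insert (j, (1 : Fin 3)) S) (Finset.ssubset_insert h1)
            (Finset.subset_univ _) (insert_cf hcf ?_)
          rintro ⟨l, k⟩ hb hc
          rcases confDn_pairs.mp hc with ⟨ha, -⟩ | ⟨rfl, hcc⟩
          · exact absurd ha (by decide)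
          · rcases hcc with ⟨ha, -⟩ | ⟨-, rfl⟩ | ⟨-, rfl⟩ | ⟨ha, -⟩
            · exact absurd ha (by decide)
            · exact hji (huniq j hb)
            · exact h2 hb
            · exact absurd ha (by decide)
      refine ⟨i, fun j => if (j, (1 : Fin 3)) ∈ S then 1 else 2, ?_, ?_⟩
      · intro j
        by_cases h : (j, (1 : Fin 3)) ∈ S <;> simp [h]
      · ext ⟨j, k⟩
        rw [mem_repB']
        rcases fin3_cases k with rfl | rfl | rfl
        · constructor
          · intro h
            exact Or.inl ⟨huniq j h, rfl⟩
          · rintro (⟨rfl, -⟩ | ⟨-, h⟩ | ⟨-, h⟩)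
            · exact hi0
            · exact absurd h (by decide)
            · by_cases h1 : (j, (1 : Fin 3)) ∈ S
              · rw [if_pos h1] at h; exact absurd h (by decide)
              · rw [if_neg h1] at h; exact absurd h (by decide)
        · by_cases hji : j = i
          · subst hji
            constructor
            · intro h; exact absurd h hi1
            · rintro (⟨-, h⟩ | ⟨-, h⟩ | ⟨h, -⟩)
              · exact absurd h (by decide)
              · exact absurd h (by decide)
              · exact absurd rfl h
          · constructor
            · intro h
              exact Or.inr (Or.inr ⟨hji, by rw [if_pos h]⟩)
            · rintro (⟨rfl, -⟩ | ⟨-, h⟩ | ⟨-, h⟩)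
              · exact absurd rfl hji
              · exact absurd h (by decide)
              · by_cases h1 : (j, (1 : Fin 3)) ∈ S
                · exact h1
                · rw [if_neg h1] at h; exact absurd h (by decide)
        · by_cases hji : j = i
          · subst hji
            exact ⟨fun _ => Or.inr (Or.inl ⟨rfl, rfl⟩), fun _ => hi2⟩
          · constructor
            · intro h
              refine Or.inr (Or.inr ⟨hji, ?_⟩)
              rw [if_neg (fun h1 => (hone j hji).mp h1 h)]
            · rintro (⟨rfl, -⟩ | ⟨h, -⟩ | ⟨-, h⟩)
              · exact absurd rfl hji
              · exact absurd h hji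
              · by_cases h1 : (j, (1 : Fin 3)) ∈ S
                · rw [if_pos h1] at h; exact absurd h (by decide)
                · by_contra h2
                  exact h1 ((hone j hji).mpr h2)
    · left
      push_neg at h0
      have h1all : ∀ j : Fin n, (j, (1 : Fin 3)) ∈ S := by
        intro j
        by_contra h1
        have h0j : (j, (0 : Fin 3)) ∉ S := h0 j
        refine hmax (insert (j, (0 : Fin 3)) S) (Finset.ssubset_insert h0j)
          (Finset.subset_univ _) (insert_cf hcf ?_)
        rintro ⟨l, k⟩ hb hc
        rcases confDn_pairs.mp hc with ⟨-, rfl, -⟩ | ⟨rfl, hcc⟩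
        · exact h0 l hb
        · rcases hcc with ⟨-, rfl⟩ | ⟨ha, -⟩ | ⟨ha, -⟩ | ⟨ha, -⟩
          · exact h1 hb
          · exact absurd ha (by decide)
          · exact absurd ha (by decide)
          · exact absurd ha (by decide)
      ext ⟨j, k⟩
      rw [mem_repA']
      rcases fin3_cases k with rfl | rfl | rfl
      · exact ⟨fun h => absurd h (h0 j), fun h => absurd h (by decide)⟩
      · exact ⟨fun _ => rfl, fun _ => h1all j⟩
      · constructor
        · intro h
          exact absurd (confDn_pairs.mpr (Or.inr ⟨rfl, by tauto⟩)) (hcf _ (h1all j) _ h)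
        · intro h; exact absurd h (by decide)
  · rintro (rfl | ⟨i, f, hf, rfl⟩)
    · refine ⟨Finset.subset_univ _, ?_, ?_⟩
      · rintro ⟨a1, a2⟩ ha ⟨b1, b2⟩ hb hc
        have ha1 : a2 = 1 := mem_repA'.mp ha
        have hb1 : b2 = 1 := mem_repA'.mp hb
        subst ha1; subst hb1
        rcases confDn_pairs.mp hc with ⟨h, -⟩ | ⟨-, hcc⟩
        · exact absurd h (by decide)
        · rcases hcc with ⟨h, -⟩ | ⟨-, h⟩ | ⟨-, h⟩ | ⟨h, -⟩ <;> exact absurd h (by decide)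
      · intro S' hss hsub hcf'
        obtain ⟨x, hxS', hxA⟩ := Finset.exists_of_ssubset hss
        obtain ⟨j, k⟩ := x
        have hk : k ≠ 1 := fun h => hxA (mem_repA'.mpr h)
        have hj1 : (j, (1 : Fin 3)) ∈ S' := hss.1 (mem_repA'.mpr rfl)
        rcases fin3_cases k with rfl | rfl | rfl
        · exact hcf' _ hxS' _ hj1 (confDn_pairs.mpr (Or.inr ⟨rfl, Or.inl ⟨rfl, rfl⟩⟩))
        · exact hk rfl
        · exact hcf' _ hxS' _ hj1 (confDn_pairs.mpr (Or.inr ⟨rfl, by tauto⟩))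
    · refine ⟨Finset.subset_univ _, ?_, ?_⟩
      · rintro ⟨a1, a2⟩ ha ⟨b1, b2⟩ hb hc
        have hA := mem_repB'.mp ha
        have hB := mem_repB'.mp hb
        rcases confDn_pairs.mp hc with ⟨rfl, rfl, hne⟩ | ⟨rfl, hcc⟩
        · -- a2 = 0, b2 = 0
          have ha1 : a1 = i := by
            rcases hA with ⟨h, -⟩ | ⟨-, h⟩ | ⟨-, h⟩
            · exact h
            · exact absurd h (by decide)
            · rcases hf a1 with h4 | h4 <;> rw [h4] at h <;> exact absurd h (by decide)
          have hb1 : b1 = i := by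
            rcases hB with ⟨h, -⟩ | ⟨-, h⟩ | ⟨-, h⟩
            · exact h
            · exact absurd h (by decide)
            · rcases hf b1 with h4 | h4 <;> rw [h4] at h <;> exact absurd h (by decide)
          rw [ha1, hb1] at hne
          exact hne rfl
        · rcases hcc with ⟨rfl, rfl⟩ | ⟨rfl, rfl⟩ | ⟨rfl, rfl⟩ | ⟨rfl, rfl⟩
          · -- a : (a1, 0), b : (a1, 1)
            have ha1 : a1 = i := by
              rcases hA with ⟨h, -⟩ | ⟨-, h⟩ | ⟨-, h⟩
              · exact h
              · exact absurd h (by decide)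
              · rcases hf a1 with h4 | h4 <;> rw [h4] at h <;> exact absurd h (by decide)
            rcases hB with ⟨-, h⟩ | ⟨-, h⟩ | ⟨h, -⟩
            · exact absurd h (by decide)
            · exact absurd h (by decide)
            · exact h ha1
          · -- a : (a1, 1), b : (a1, 0)
            have hb1 : a1 = i := by
              rcases hB with ⟨h, -⟩ | ⟨-, h⟩ | ⟨-, h⟩
              · exact h
              · exact absurd h (by decide)
              · rcases hf a1 with h4 | h4 <;> rw [h4] at h <;> exact absurd h (by decide)
            rcases hA with ⟨-, h⟩ | ⟨-, h⟩ | ⟨h, -⟩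
            · exact absurd h (by decide)
            · exact absurd h (by decide)
            · exact h hb1
          · -- a : (a1, 1), b : (a1, 2)
            have haf : a1 ≠ i ∧ (1 : Fin 3) = f a1 := by
              rcases hA with ⟨-, h⟩ | ⟨-, h⟩ | ⟨h1, h⟩
              · exact absurd h (by decide)
              · exact absurd h (by decide)
              · exact ⟨h1, h⟩
            rcases hB with ⟨-, h⟩ | ⟨h, -⟩ | ⟨-, h⟩
            · exact absurd h (by decide)
            · exact haf.1 h
            · rw [← haf.2] at h
              exact absurd h (by decide)
          · -- a : (a1, 2), b : (a1, 1)
            have hbf : a1 ≠ i ∧ (1 : Fin 3) = f a1 := by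
              rcases hB with ⟨-, h⟩ | ⟨-, h⟩ | ⟨h1, h⟩
              · exact absurd h (by decide)
              · exact absurd h (by decide)
              · exact ⟨h1, h⟩
            rcases hA with ⟨-, h⟩ | ⟨h, -⟩ | ⟨-, h⟩
            · exact absurd h (by decide)
            · exact hbf.1 h
            · rw [← hbf.2] at h
              exact absurd h (by decide)
      · intro S' hss hsub hcf'
        obtain ⟨x, hxS', hxB⟩ := Finset.exists_of_ssubset hss
        obtain ⟨j, k⟩ := x
        have hi0' : (i, (0 : Fin 3)) ∈ S' := hss.1 (mem_repB'.mpr (Or.inl ⟨rfl, rfl⟩))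
        have hi2' : (i, (2 : Fin 3)) ∈ S' :=
          hss.1 (mem_repB'.mpr (Or.inr (Or.inl ⟨rfl, rfl⟩)))
        by_cases hji : j = i
        · subst hji
          have hk : k = 1 := by
            rcases fin3_cases k with rfl | rfl | rfl
            · exact absurd (mem_repB'.mpr (Or.inl ⟨rfl, rfl⟩)) hxB
            · rfl
            · exact absurd (mem_repB'.mpr (Or.inr (Or.inl ⟨rfl, rfl⟩))) hxB
          subst hk
          exact hcf' _ hi0' _ hxS' (confDn_pairs.mpr (Or.inr ⟨rfl, Or.inl ⟨rfl, rfl⟩⟩))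
        · have hfj : (j, f j) ∈ S' :=
            hss.1 (mem_repB'.mpr (Or.inr (Or.inr ⟨hji, rfl⟩)))
          have hkfj : k ≠ f j := fun h =>
            hxB (mem_repB'.mpr (Or.inr (Or.inr ⟨hji, h⟩)))
          rcases fin3_cases k with rfl | rfl | rfl
          · exact hcf' _ hxS' _ hi0' (confDn_pairs.mpr (Or.inl ⟨rfl, rfl, hji⟩))
          · have hfj2 : f j = 2 := by
              rcases hf j with h | h
              · exact absurd h.symm hkfj
              · exact h
            rw [hfj2] at hfj
            exact hcf' _ hxS' _ hfj (confDn_pairs.mpr (Or.inr ⟨rfl, by tauto⟩))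
          · have hfj1 : f j = 1 := by
              rcases hf j with h | h
              · exact h
              · exact absurd h.symm hkfj
            rw [hfj1] at hfj
            exact hcf' _ hxS' _ hfj (confDn_pairs.mpr (Or.inr ⟨rfl, by tauto⟩))
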